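/- Let 𝓔 be a collection of admissible subsets of ℝ^d, let s, σ ∈ (0,1/2), and let τ ∈ (0,1) satisfy 0 < σ < τ/(1+2τ). Suppose that for every Q ∈ 𝓔 and every measurable function f : Q → ℝ which assumes only the three values 0, 1 and 2, one has J(f^*, I', σ) ≤ sup_{E ∈ 𝓔(Q)} J(f, E, s) for every bounded closed subinterval I' of positive length contained in (0, λ(Q)), where f^* is the non-increasing rearrangement of f and 𝓔(Q) is the collection of sets of 𝓔 contained in Q. Then (τ,s) is a John–Strömberg pair for 𝓔. -/

import Mathlib

open MeasureTheory Set

/-- The John–Strömberg functional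
`J(f,E,s) = inf_{c ∈ ℝ} inf {α ≥ 0 : μ({x ∈ E : |f(x) − c| > α}) < s·μ(E)}`. -/
noncomputable def JS {X : Type*} [MeasurableSpace X] (μ : Measure X)
    (f : X → ℝ) (E : Set X) (s : ℝ) : ℝ :=
  sInf {α : ℝ | 0 ≤ α ∧ ∃ c : ℝ, μ {x ∈ E | α < |f x - c|} < ENNReal.ofReal s * μ E}

/-- An admissible set: measurable with positive finite measure. -/
def Admissible {X : Type*} [MeasurableSpace X] (μ : Measure X) (E : Set X) : Prop :=
  MeasurableSet E ∧ 0 < μ E ∧ μ E < ⊤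

/-- `(τ,s)` is a John–Strömberg pair for the collection `𝓔`. -/
def IsJSPair {X : Type*} [MeasurableSpace X] (μ : Measure X)
    (𝓔 : Set (Set X)) (τ s : ℝ) : Prop :=
  0 < τ ∧ 0 < s ∧
  ∀ Q ∈ 𝓔, ∀ Ep Em G : Set X,
    MeasurableSet Ep → MeasurableSet Em → MeasurableSet G →
    Disjoint Ep Em → Disjoint Ep G → Disjoint Em G →
    Q = Ep ∪ Em ∪ G →
    ENNReal.ofReal τ * μ G < min (μ Ep) (μ Em) →
    ∃ W ∈ 𝓔, W ⊆ Q ∧ ENNReal.ofReal s * μ W ≤ min (μ (W ∩ Ep)) (μ (W ∩ Em))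

/-- The non-increasing rearrangement `g^*(t) = inf {α > 0 : μ({x : g x > α}) ≤ t}`. -/
noncomputable def rearr {X : Type*} [MeasurableSpace X] (μ : Measure X)
    (g : X → ℝ) (t : ℝ) : ℝ :=
  sInf {α : ℝ | 0 < α ∧ μ {x | α < g x} ≤ ENNReal.ofReal t}

theorem stmt6 {d : ℕ} (𝓔 : Set (Set (Fin d → ℝ)))
    (h𝓔 : ∀ E ∈ 𝓔, Admissible volume E)
    (s σ : ℝ) (hs : s ∈ Set.Ioo (0:ℝ) (1/2)) (hσ : σ ∈ Set.Ioo (0:ℝ) (1/2))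
    (τ : ℝ) (hτ : τ ∈ Set.Ioo (0:ℝ) 1) (hστ : σ < τ / (1 + 2 * τ))
    (hyp : ∀ Q ∈ 𝓔, ∀ f : (Fin d → ℝ) → ℝ, Measurable f →
      (∀ x ∈ Q, f x = 0 ∨ f x = 1 ∨ f x = 2) →
      ∀ a b : ℝ, 0 < a → a < b → b < (volume Q).toReal →
        JS volume (rearr volume (Q.indicator f)) (Set.Icc a b) σ ≤
          ⨆ E : {E : Set (Fin d → ℝ) // E ∈ 𝓔 ∧ E ⊆ Q}, JS volume f E.1 s) :
    IsJSPair volume 𝓔 τ s := by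
  obtain ⟨hs0, hs2⟩ := hs
  obtain ⟨hσ0, hσ2⟩ := hσ
  obtain ⟨hτ0, hτ1⟩ := hτ
  refine ⟨hτ0, hs0, ?_⟩
  intro Q hQ Ep Em G hEp hEm hG hpm hpg hmg hQeq hmin
  obtain ⟨hQm, hQ0, hQfin⟩ := h𝓔 Q hQ
  -- the three-valued function
  set f : (Fin d → ℝ) → ℝ :=
    fun x => Ep.indicator (fun _ => 2) x + G.indicator (fun _ => 1) x with hfdef
  have hfmeas : Measurable f :=
    (measurable_const.indicator hEp).add (measurable_const.indicator hG)
  have hfEp : ∀ x ∈ Ep, f x = 2 := by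
    intro x hx
    have hxG : x ∉ G := Set.disjoint_left.mp hpg hx
    simp [hfdef, Set.indicator_of_mem hx, Set.indicator_of_notMem hxG]
  have hfG : ∀ x ∈ G, f x = 1 := by
    intro x hx
    have hxE : x ∉ Ep := Set.disjoint_right.mp hpg hx
    simp [hfdef, Set.indicator_of_mem hx, Set.indicator_of_notMem hxE]
  have hf0 : ∀ x, x ∉ Ep → x ∉ G → f x = 0 := by
    intro x hx hg
    simp [hfdef, Set.indicator_of_notMem hx, Set.indicator_of_notMem hg]
  have hfval : ∀ x, f x = 0 ∨ f x = 1 ∨ f x = 2 := by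
    intro x
    by_cases hx : x ∈ Ep
    · exact Or.inr (Or.inr (hfEp x hx))
    by_cases hg : x ∈ G
    · exact Or.inr (Or.inl (hfG x hg))
    · exact Or.inl (hf0 x hx hg)
  have hf2Ep : ∀ x, f x = 2 → x ∈ Ep := by
    intro x h
    by_contra hx
    by_cases hg : x ∈ G
    · rw [hfG x hg] at h; norm_num at h
    · rw [hf0 x hx hg] at h; norm_num at h
  have hf0inv : ∀ x, f x = 0 → x ∉ Ep ∧ x ∉ G := by
    intro x h
    constructor
    · intro hx; rw [hfEp x hx] at h; norm_num at h
    · intro hg; rw [hfG x hg] at h; norm_num at h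
  -- subsets of Q
  have hEpQ : Ep ⊆ Q := by rw [hQeq]; exact subset_union_left.trans subset_union_left
  have hEmQ : Em ⊆ Q := by rw [hQeq]; exact subset_union_right.trans subset_union_left
  have hGQ : G ⊆ Q := by rw [hQeq]; exact subset_union_right
  have hind : Q.indicator f = f := by
    apply Set.indicator_eq_self.2
    intro x hx
    by_contra hxQ
    exact hx (hf0 x (fun h => hxQ (hEpQ h)) (fun h => hxQ (hGQ h)))
  -- measures
  have hpfin : volume Ep ≠ ⊤ := ((measure_mono hEpQ).trans_lt hQfin).ne
  have hmfin : volume Em ≠ ⊤ := ((measure_mono hEmQ).trans_lt hQfin).ne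
  have hgfin : volume G ≠ ⊤ := ((measure_mono hGQ).trans_lt hQfin).ne
  have hmin0 : 0 < min (volume Ep) (volume Em) := lt_of_le_of_lt zero_le hmin
  have hp0 : 0 < volume Ep := lt_of_lt_of_le hmin0 (min_le_left _ _)
  have hm0 : 0 < volume Em := lt_of_lt_of_le hmin0 (min_le_right _ _)
  set P := (volume Ep).toReal with hPdef
  set M := (volume Em).toReal with hMdef
  set Gm := (volume G).toReal with hGmdef
  have hPpos : 0 < P := ENNReal.toReal_pos hp0.ne' hpfin
  have hMpos : 0 < M := ENNReal.toReal_pos hm0.ne' hmfin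
  have hGm0 : 0 ≤ Gm := ENNReal.toReal_nonneg
  have hQsum : volume Q = volume Ep + volume Em + volume G := by
    rw [hQeq, measure_union (hpg.union_left hmg) hG, measure_union hpm hEm]
  have hQtoReal : (volume Q).toReal = P + M + Gm := by
    rw [hQsum, ENNReal.toReal_add (by finiteness) hgfin,
      ENNReal.toReal_add hpfin hmfin]
  have hτGmlt : ∀ v : ENNReal, ENNReal.ofReal τ * volume G < v → v ≠ ⊤ → τ * Gm < v.toReal := by
    intro v hv hvfin
    have h1 : (ENNReal.ofReal τ * volume G).toReal < v.toReal :=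
      (ENNReal.toReal_lt_toReal (ENNReal.mul_ne_top ENNReal.ofReal_ne_top hgfin) hvfin).mpr hv
    rwa [ENNReal.toReal_mul, ENNReal.toReal_ofReal hτ0.le] at h1
  have hτP : τ * Gm < P := hτGmlt _ (hmin.trans_le (min_le_left _ _)) hpfin
  have hτM : τ * Gm < M := hτGmlt _ (hmin.trans_le (min_le_right _ _)) hmfin
  -- the parameters of the interval
  set δ := max (τ * Gm) (min P M / 2) with hδdef
  have hδpos : 0 < δ := lt_max_of_lt_right (half_pos (lt_min hPpos hMpos))
  have hδP : δ < P := max_lt hτP (by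
    have := min_le_left P M; linarith)
  have hδM : δ < M := max_lt hτM (by
    have := min_le_right P M; linarith)
  set a := P - δ with hadef
  set b := P + Gm + δ with hbdef
  have ha0 : 0 < a := by simp only [hadef]; linarith
  have hab : a < b := by simp only [hadef, hbdef]; linarith
  have hbT : b < (volume Q).toReal := by rw [hQtoReal]; simp only [hbdef]; linarith
  have hba : b - a = Gm + 2 * δ := by simp only [hadef, hbdef]; ring
  -- key numeric inequality
  have hσδ : σ * (b - a) ≤ δ := by
    rw [hba]
    have hτσ : σ * (1 + 2 * τ) < τ := by
      have h := (lt_div_iff₀ (show (0:ℝ) < 1 + 2 * τ by linarith)).mp hστ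
      linarith
    have hδτ : τ * Gm ≤ δ := le_max_left _ _
    nlinarith [mul_nonneg hGm0 (show (0:ℝ) ≤ τ - 2 * σ * τ - σ by nlinarith),
      mul_le_mul_of_nonneg_left hδτ (show (0:ℝ) ≤ 1 - 2 * σ by linarith)]
  -- computation of the rearrangement
  have hrearr2 : ∀ t : ℝ, 0 ≤ t → t < P → rearr volume (Q.indicator f) t = 2 := by
    intro t ht0 htP
    rw [hind]
    unfold rearr
    have hset : {α : ℝ | 0 < α ∧ volume {x | α < f x} ≤ ENNReal.ofReal t} = Ici 2 := by
      ext α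
      simp only [mem_setOf_eq, mem_Ici]
      constructor
      · rintro ⟨hα, hle⟩
        by_contra h
        push_neg at h
        have hsub : Ep ⊆ {x | α < f x} := by
          intro x hx
          simp only [mem_setOf_eq, hfEp x hx]
          exact h
        have h1 : volume Ep ≤ ENNReal.ofReal t := (measure_mono hsub).trans hle
        have h2 : ENNReal.ofReal t < volume Ep := by
          rw [← ENNReal.ofReal_toReal hpfin]
          exact (ENNReal.ofReal_lt_ofReal_iff hPpos).mpr htP
        exact absurd h1 h2.not_ge
      · intro h
        refine ⟨lt_of_lt_of_le two_pos h, ?_⟩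
        have hempty : {x | α < f x} = ∅ := by
          ext x
          simp only [mem_setOf_eq, mem_empty_iff_false, iff_false, not_lt]
          rcases hfval x with h' | h' | h' <;> rw [h'] <;> linarith
        rw [hempty]
        simp
    rw [hset, csInf_Ici]
  have hrearr0 : ∀ t : ℝ, P + Gm ≤ t → rearr volume (Q.indicator f) t = 0 := by
    intro t ht
    rw [hind]
    unfold rearr
    have hset : {α : ℝ | 0 < α ∧ volume {x | α < f x} ≤ ENNReal.ofReal t} = Ioi 0 := by
      ext α
      simp only [mem_setOf_eq, mem_Ioi]
      constructor
      · exact fun h => h.1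
      · intro hα
        refine ⟨hα, ?_⟩
        have hsub : {x | α < f x} ⊆ Ep ∪ G := by
          intro x hx
          simp only [mem_setOf_eq] at hx
          by_contra hc
          simp only [mem_union, not_or] at hc
          rw [hf0 x hc.1 hc.2] at hx
          linarith
        calc volume {x | α < f x} ≤ volume (Ep ∪ G) := measure_mono hsub
          _ ≤ volume Ep + volume G := measure_union_le _ _
          _ = ENNReal.ofReal (P + Gm) := by
              rw [ENNReal.ofReal_add ENNReal.toReal_nonneg ENNReal.toReal_nonneg,
                ENNReal.ofReal_toReal hpfin, ENNReal.ofReal_toReal hgfin]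
          _ ≤ ENNReal.ofReal t := ENNReal.ofReal_le_ofReal ht
    rw [hset, csInf_Ioi]
  have hrearrbd : ∀ t : ℝ, rearr volume (Q.indicator f) t ∈ Icc (0:ℝ) 2 := by
    intro t
    rw [hind]
    unfold rearr
    have h2mem : (2:ℝ) ∈ {α : ℝ | 0 < α ∧ volume {x | α < f x} ≤ ENNReal.ofReal t} := by
      refine ⟨two_pos, ?_⟩
      have hempty : {x | (2:ℝ) < f x} = ∅ := by
        ext x
        simp only [mem_setOf_eq, mem_empty_iff_false, iff_false, not_lt]
        rcases hfval x with h' | h' | h' <;> rw [h'] <;> linarith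
      rw [hempty]; simp
    constructor
    · exact le_csInf ⟨2, h2mem⟩ (fun α hα => hα.1.le)
    · exact csInf_le ⟨0, fun α hα => hα.1.le⟩ h2mem
  -- lower bound for JS of the rearrangement on [a,b]
  have hJSlow : (1:ℝ) ≤ JS volume (rearr volume (Q.indicator f)) (Set.Icc a b) σ := by
    unfold JS
    apply le_csInf
    · refine ⟨1, zero_le_one, 1, ?_⟩
      have hempty : {x ∈ Icc a b | 1 < |rearr volume (Q.indicator f) x - 1|} = ∅ := by
        ext t
        simp only [mem_setOf_eq, mem_empty_iff_false, iff_false, not_and, not_lt]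
        intro _
        have := hrearrbd t
        rw [abs_le]
        constructor <;> [linarith [this.1]; linarith [this.2]]
      rw [hempty]
      simp only [measure_empty]
      exact ENNReal.mul_pos (ENNReal.ofReal_pos.mpr hσ0).ne'
        (by rw [Real.volume_Icc]; exact (ENNReal.ofReal_pos.mpr (by linarith)).ne')
    · rintro α ⟨hα0, c, hc⟩
      by_contra hlt
      push_neg at hlt
      have hcase : α < |2 - c| ∨ α < |0 - c| := by
        by_contra h
        push_neg at h
        obtain ⟨h1, h2⟩ := h
        have := abs_sub_le (2:ℝ) c 0
        simp only [sub_zero] at this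
        rw [abs_sub_comm (0:ℝ) c, sub_zero] at h2
        have : (2:ℝ) ≤ |2 - c| + |c| := by
          calc (2:ℝ) = |(2:ℝ)| := by norm_num
            _ = |(2 - c) + c| := by rw [sub_add_cancel]
            _ ≤ |2 - c| + |c| := abs_add_le _ _
        linarith [abs_nonneg (2 - c), abs_nonneg c]
      have hIccvol : ENNReal.ofReal σ * volume (Icc a b) ≤ ENNReal.ofReal δ := by
        rw [Real.volume_Icc, ← ENNReal.ofReal_mul hσ0.le]
        exact ENNReal.ofReal_le_ofReal hσδ
      rcases hcase with hcase | hcase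
      · have hsub : Ico a P ⊆ {x ∈ Icc a b | α < |rearr volume (Q.indicator f) x - c|} := by
          rintro t ⟨hta, htP⟩
          refine ⟨⟨hta, le_of_lt (htP.trans_le (by simp only [hbdef]; linarith))⟩, ?_⟩
          rw [hrearr2 t (le_of_lt (lt_of_lt_of_le ha0 hta)) htP]
          exact hcase
        have h1 : ENNReal.ofReal δ ≤ volume {x ∈ Icc a b | α < |rearr volume (Q.indicator f) x - c|} := by
          have := measure_mono (μ := volume) hsub
          rw [Real.volume_Ico] at this
          have heq : P - a = δ := by simp only [hadef]; ring
          rwa [heq] at this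
        exact absurd (hc.trans_le hIccvol) h1.not_gt
      · have hsub : Icc (P + Gm) b ⊆ {x ∈ Icc a b | α < |rearr volume (Q.indicator f) x - c|} := by
          rintro t ⟨htP, htb⟩
          refine ⟨⟨le_trans (by simp only [hadef]; linarith) htP, htb⟩, ?_⟩
          rw [hrearr0 t htP]
          exact hcase
        have h1 : ENNReal.ofReal δ ≤ volume {x ∈ Icc a b | α < |rearr volume (Q.indicator f) x - c|} := by
          have := measure_mono (μ := volume) hsub
          rw [Real.volume_Icc] at this
          have heq : b - (P + Gm) = δ := by simp only [hbdef]; ring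
          rwa [heq] at this
        exact absurd (hc.trans_le hIccvol) h1.not_gt
  -- apply the hypothesis
  have hsup : (1:ℝ) ≤ ⨆ E : {E : Set (Fin d → ℝ) // E ∈ 𝓔 ∧ E ⊆ Q}, JS volume f E.1 s :=
    hJSlow.trans (hyp Q hQ f hfmeas (fun x _ => hfval x) a b ha0 hab hbT)
  -- extract a witness W
  have hex : ∃ E : {E : Set (Fin d → ℝ) // E ∈ 𝓔 ∧ E ⊆ Q}, (1:ℝ)/2 < JS volume f E.1 s := by
    by_contra h
    push_neg at h
    rcases isEmpty_or_nonempty {E : Set (Fin d → ℝ) // E ∈ 𝓔 ∧ E ⊆ Q} with hemp | hne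
    · rw [iSup_of_empty'] at hsup
      rw [Real.sSup_empty] at hsup
      linarith
    · have := ciSup_le h
      linarith [hsup.trans this]
  obtain ⟨⟨W, hW𝓔, hWQ⟩, hWgt⟩ := hex
  refine ⟨W, hW𝓔, hWQ, ?_⟩
  simp only at hWgt
  -- from JS > 1/2, every c gives a big level set at height 1/2
  have hnotmem : ((1:ℝ)/2) ∉
      {α : ℝ | 0 ≤ α ∧ ∃ c : ℝ, volume {x ∈ W | α < |f x - c|} < ENNReal.ofReal s * volume W} := by
    intro hmem
    exact absurd (csInf_le ⟨0, fun x hx => hx.1⟩ hmem) (not_le.mpr hWgt)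
  have hforall : ∀ c : ℝ, ENNReal.ofReal s * volume W ≤ volume {x ∈ W | 1/2 < |f x - c|} := by
    intro c
    by_contra h
    push_neg at h
    exact hnotmem ⟨by norm_num, c, h⟩
  have hEpset : {x ∈ W | 1/2 < |f x - 1/2|} = W ∩ Ep := by
    ext x
    simp only [mem_setOf_eq, mem_inter_iff]
    constructor
    · rintro ⟨hxW, habs⟩
      refine ⟨hxW, ?_⟩
      rcases hfval x with h' | h' | h'
      · exfalso
        have hb : |f x - 1/2| ≤ 1/2 := by
          rw [h', abs_le]; constructor <;> norm_num
        linarith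
      · exfalso
        have hb : |f x - 1/2| ≤ 1/2 := by
          rw [h', abs_le]; constructor <;> norm_num
        linarith
      · exact hf2Ep x h'
    · rintro ⟨hxW, hxEp⟩
      refine ⟨hxW, ?_⟩
      rw [hfEp x hxEp, show (2:ℝ) - 1/2 = 3/2 by norm_num,
        abs_of_nonneg (by norm_num : (0:ℝ) ≤ 3/2)]
      norm_num
  have hEmset : {x ∈ W | 1/2 < |f x - 3/2|} = W ∩ Em := by
    ext x
    simp only [mem_setOf_eq, mem_inter_iff]
    constructor
    · rintro ⟨hxW, habs⟩
      refine ⟨hxW, ?_⟩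
      rcases hfval x with h' | h' | h'
      · obtain ⟨hx1, hx2⟩ := hf0inv x h'
        have hxQ : x ∈ Ep ∪ Em ∪ G := by rw [← hQeq]; exact hWQ hxW
        rcases hxQ with (h | h) | h
        · exact absurd h hx1
        · exact h
        · exact absurd h hx2
      · exfalso
        have hb : |f x - 3/2| ≤ 1/2 := by
          rw [h', abs_le]; constructor <;> norm_num
        linarith
      · exfalso
        have hb : |f x - 3/2| ≤ 1/2 := by
          rw [h', abs_le]; constructor <;> norm_num
        linarith
    · rintro ⟨hxW, hxEm⟩
      refine ⟨hxW, ?_⟩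
      rw [hf0 x (Set.disjoint_right.mp hpm hxEm) (Set.disjoint_left.mp hmg hxEm),
        show (0:ℝ) - 3/2 = -(3/2) by norm_num, abs_neg,
        abs_of_nonneg (by norm_num : (0:ℝ) ≤ 3/2)]
      norm_num
  apply le_min
  · rw [← hEpset]; exact (hforall (1/2)).trans_eq (by norm_num)
  · rw [← hEmset]; exact (hforall (3/2)).trans_eq (by norm_num)
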